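/- Let $H$ be a Hilbert function space, $F$ a multiplier such that $M_F$ is an isometry with $\dim\ker(M_F^*) = d < \infty$. Let $\lambda_1,\dots,\lambda_N$ be points with kernels $k_{\lambda_i}$ and $\omega_i = F(\lambda_i)$. Then the Pick matrix $[(1-\omega_i\overline{\omega_j})\langle k_{\lambda_j},k_{\lambda_i}\rangle]$ has rank at most $d$. In particular, if $N > d$ the Pick matrix is singular. -/

import Mathlib

open scoped InnerProductSpace

/-- If `F` is a multiplier of a Hilbert function space whose multiplication operator is an
isometry with `dim ker M_F* = d < ∞`, then every Pick matrix built from points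
`λ₁,…,λ_N` and targets `ω_i = F(λ_i)` has rank at most `d`; in particular it is singular
whenever `N > d`. -/
theorem stmt8 {X : Type*} {H : Type*} [NormedAddCommGroup H] [InnerProductSpace ℂ H]
    [CompleteSpace H]
    (j : H →ₗ[ℂ] (X → ℂ)) (hj : Function.Injective j)
    (k : X → H) (hk : ∀ (f : H) (lam : X), ⟪k lam, f⟫_ℂ = j f lam)
    (F : X → ℂ) (M : H →L[ℂ] H)
    (hM : ∀ (f : H) (x : X), j (M f) x = F x * j f x)
    (hiso : ∀ x, ‖M x‖ = ‖x‖)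
    (d : ℕ)
    (hfin : FiniteDimensional ℂ (LinearMap.ker (ContinuousLinearMap.adjoint M : H →ₗ[ℂ] H)))
    (hd : Module.finrank ℂ (LinearMap.ker (ContinuousLinearMap.adjoint M : H →ₗ[ℂ] H)) = d)
    (N : ℕ) (lam : Fin N → X) (omega : Fin N → ℂ) (homega : ∀ i, omega i = F (lam i)) :
    (Matrix.of fun i j' : Fin N =>
        (1 - omega i * (starRingEnd ℂ) (omega j')) * ⟪k (lam i), k (lam j')⟫_ℂ).rank ≤ d ∧
    (d < N →
      (Matrix.of fun i j' : Fin N =>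
        (1 - omega i * (starRingEnd ℂ) (omega j')) * ⟪k (lam i), k (lam j')⟫_ℂ).det = 0) := by
  set Mstar := ContinuousLinearMap.adjoint M with hMstar
  have hinner : ∀ f g : H, ⟪M f, M g⟫_ℂ = ⟪f, g⟫_ℂ := fun f g =>
    LinearIsometry.inner_map_map ⟨M.toLinearMap, hiso⟩ f g
  have hadj : ∀ f g : H, ⟪Mstar f, g⟫_ℂ = ⟪f, M g⟫_ℂ := fun f g =>
    ContinuousLinearMap.adjoint_inner_left M g f
  have hadj' : ∀ f g : H, ⟪f, Mstar g⟫_ℂ = ⟪M f, g⟫_ℂ := fun f g =>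
    ContinuousLinearMap.adjoint_inner_right M f g
  have hMM : ∀ f, Mstar (M f) = f := by
    intro f
    apply ext_inner_right ℂ
    intro v
    rw [hadj, hinner]
  have hstar_k : ∀ x, Mstar (k x) = (starRingEnd ℂ) (F x) • k x := by
    intro x
    apply ext_inner_right ℂ
    intro v
    rw [hadj, hk, hM, inner_smul_left, ← hk]
    simp
  set v : Fin N → H := fun i => k (lam i) - M (Mstar (k (lam i))) with hv
  have hvker : ∀ i, v i ∈ LinearMap.ker (Mstar : H →ₗ[ℂ] H) := by
    intro i
    simp [hv, LinearMap.mem_ker, map_sub, hMM]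
  have hkey : ∀ i i', ⟪v i, v i'⟫_ℂ
      = (1 - omega i * (starRingEnd ℂ) (omega i')) * ⟪k (lam i), k (lam i')⟫_ℂ := by
    intro i i'
    have h1 : ⟪k (lam i), M (Mstar (k (lam i')))⟫_ℂ = ⟪Mstar (k (lam i)), Mstar (k (lam i'))⟫_ℂ := by
      rw [hadj]
    have h2 : ⟪M (Mstar (k (lam i))), k (lam i')⟫_ℂ = ⟪Mstar (k (lam i)), Mstar (k (lam i'))⟫_ℂ := by
      rw [← hadj']
    have h3 : ⟪M (Mstar (k (lam i))), M (Mstar (k (lam i')))⟫_ℂ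
        = ⟪Mstar (k (lam i)), Mstar (k (lam i'))⟫_ℂ := hinner _ _
    have h4 : ⟪Mstar (k (lam i)), Mstar (k (lam i'))⟫_ℂ
        = omega i * (starRingEnd ℂ) (omega i') * ⟪k (lam i), k (lam i')⟫_ℂ := by
      rw [hstar_k, hstar_k, inner_smul_left, inner_smul_right, homega, homega]
      ring_nf
      simp [mul_comm, mul_assoc, mul_left_comm]
    simp only [hv, inner_sub_left, inner_sub_right, h1, h2, h3, h4]
    ring
  set K := LinearMap.ker (Mstar : H →ₗ[ℂ] H) with hK
  haveI : FiniteDimensional ℂ K := hfin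
  set b := stdOrthonormalBasis ℂ K with hb
  set B : Matrix (Fin (Module.finrank ℂ K)) (Fin N) ℂ :=
    Matrix.of (fun t i => ⟪((b t : K) : H), v i⟫_ℂ) with hB
  set A : Matrix (Fin N) (Fin N) ℂ :=
    Matrix.of (fun i j' : Fin N =>
        (1 - omega i * (starRingEnd ℂ) (omega j')) * ⟪k (lam i), k (lam j')⟫_ℂ) with hA
  have hAB : A = B.conjTranspose * B := by
    ext i i'
    have hsum := b.sum_inner_mul_inner (⟨v i, hvker i⟩ : K) (⟨v i', hvker i'⟩ : K)
    simp only [Submodule.coe_inner] at hsum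
    simp only [hA, hB, Matrix.mul_apply, Matrix.conjTranspose_apply, Matrix.of_apply,
      RCLike.star_def, inner_conj_symm]
    rw [hsum, hkey]
  have hrank : A.rank ≤ d := by
    calc A.rank = (B.conjTranspose * B).rank := by rw [hAB]
      _ ≤ B.rank := Matrix.rank_mul_le_right _ _
      _ ≤ Fintype.card (Fin (Module.finrank ℂ K)) := Matrix.rank_le_card_height B
      _ = d := by simp [hd]
  refine ⟨hrank, fun hdN => ?_⟩
  by_contra hdet
  have : IsUnit A := (Matrix.isUnit_iff_isUnit_det A).mpr (Ne.isUnit hdet)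
  have := Matrix.rank_of_isUnit A this
  simp only [Fintype.card_fin] at this
  omega
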